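/- Let K be a field with algebraic closure K̄, let d ≥ 1, and let p, q ∈ K[X₁,…,X_d] with q ≠ 0. Let q = c·q₁^{e₁}⋯q_m^{e_m} be the factorization of q into a unit c and pairwise non-associate irreducible polynomials q₁,…,q_m of K[X₁,…,X_d] with positive exponents e₁,…,e_m. Then the rational function f = p/q ∈ K(X₁,…,X_d) can be written as f = Σ_A p_A / ∏_{i∈A} q_i^{b_{A,i}}, where the sum ranges over subsets A ⊆ {1,…,m} such that (i) the polynomials q_i for i ∈ A have a common zero in K̄^d and (ii) the family (q_i)_{i∈A} is algebraically independent over K; here each p_A ∈ K[X₁,…,X_d] (possibly zero) and the b_{A,i} are positive integers (possibly greater than e_i). -/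

import Mathlib

open MvPolynomial

namespace LeinartasAux

variable {K : Type*} [Field K] {d m : ℕ}

local notation "R" => MvPolynomial (Fin d) K
local notation "F" => FractionRing (MvPolynomial (Fin d) K)
local notation "φ" => algebraMap (MvPolynomial (Fin d) K) (FractionRing (MvPolynomial (Fin d) K))

/-- The "good" subsets: common zero over the algebraic closure and algebraic independence. -/
def Good (qi : Fin m → MvPolynomial (Fin d) K) (A : Finset (Fin m)) : Prop :=
  (∃ x : Fin d → AlgebraicClosure K, ∀ i ∈ A,
      MvPolynomial.eval x
        (MvPolynomial.map (algebraMap K (AlgebraicClosure K)) (qi i)) = 0) ∧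
    AlgebraicIndependent K (fun i : A => qi (i : Fin m))

/-- Decomposable elements of the fraction field. -/
def Decomp (qi : Fin m → MvPolynomial (Fin d) K) (f : FractionRing (MvPolynomial (Fin d) K)) :
    Prop :=
  ∃ (P : Finset (Fin m) → MvPolynomial (Fin d) K) (B : Finset (Fin m) → Fin m → ℕ),
    (∀ A, ∀ i ∈ A, 0 < B A i) ∧
    (∀ A, P A ≠ 0 → Good qi A) ∧
    f = ∑ A : Finset (Fin m), φ (P A) / φ (∏ i ∈ A, qi i ^ B A i)

theorem phi_ne_zero {x : MvPolynomial (Fin d) K} (hx : x ≠ 0) : φ x ≠ 0 := by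
  intro h
  exact hx (IsFractionRing.injective (MvPolynomial (Fin d) K) F (by simpa using h))

theorem frac_mul (x y E : MvPolynomial (Fin d) K) (hE : E ≠ 0) :
    φ x / φ y = φ (x * E) / φ (y * E) := by
  rw [map_mul, map_mul, mul_div_mul_right _ _ (phi_ne_zero hE)]

theorem decomp_zero (qi : Fin m → MvPolynomial (Fin d) K) : Decomp qi 0 := by
  refine ⟨0, fun _ _ => 1, fun _ _ _ => one_pos, fun A h => absurd rfl h, ?_⟩
  simp

theorem decomp_add {qi : Fin m → MvPolynomial (Fin d) K} (hq0 : ∀ i, qi i ≠ 0)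
    {f g : FractionRing (MvPolynomial (Fin d) K)} (hf : Decomp qi f) (hg : Decomp qi g) :
    Decomp qi (f + g) := by
  obtain ⟨P, B, hB, hP, rfl⟩ := hf
  obtain ⟨P', B', hB', hP', rfl⟩ := hg
  classical
  refine ⟨fun A => P A * ∏ i ∈ A, qi i ^ (max (B A i) (B' A i) - B A i)
      + P' A * ∏ i ∈ A, qi i ^ (max (B A i) (B' A i) - B' A i),
    fun A i => max (B A i) (B' A i), ?_, ?_, ?_⟩
  · intro A i hi
    exact lt_of_lt_of_le (hB A i hi) (le_max_left _ _)
  · intro A h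
    by_cases h1 : P A = 0
    · refine hP' A fun h2 => h ?_
      simp only [h1, h2, zero_mul, add_zero]
    · exact hP A h1
  · rw [← Finset.sum_add_distrib]
    refine Finset.sum_congr rfl fun A _ => ?_
    have hprod : ∀ (b : Fin m → ℕ), (∏ i ∈ A, qi i ^ b i) ≠ 0 :=
      fun b => Finset.prod_ne_zero_iff.mpr fun i _ => pow_ne_zero _ (hq0 i)
    have e1 : (∏ i ∈ A, qi i ^ (max (B A i) (B' A i)))
        = (∏ i ∈ A, qi i ^ B A i) * ∏ i ∈ A, qi i ^ (max (B A i) (B' A i) - B A i) := by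
      rw [← Finset.prod_mul_distrib]
      exact Finset.prod_congr rfl fun i _ => by
        rw [← pow_add, Nat.add_sub_cancel' (le_max_left _ _)]
    have e2 : (∏ i ∈ A, qi i ^ (max (B A i) (B' A i)))
        = (∏ i ∈ A, qi i ^ B' A i) * ∏ i ∈ A, qi i ^ (max (B A i) (B' A i) - B' A i) := by
      rw [← Finset.prod_mul_distrib]
      exact Finset.prod_congr rfl fun i _ => by
        rw [← pow_add, Nat.add_sub_cancel' (le_max_right _ _)]
    rw [frac_mul (P A) _ _ (hprod _), frac_mul (P' A) _ _ (hprod _), ← e1, ← e2,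
      ← add_div, ← RingHom.map_add]

theorem decomp_sum {qi : Fin m → MvPolynomial (Fin d) K} (hq0 : ∀ i, qi i ≠ 0)
    {ι : Type*} (s : Finset ι) (f : ι → FractionRing (MvPolynomial (Fin d) K))
    (hf : ∀ t ∈ s, Decomp qi (f t)) : Decomp qi (∑ t ∈ s, f t) := by
  classical
  induction s using Finset.induction_on with
  | empty => simpa using decomp_zero qi
  | insert _ _ hni ih =>
    rw [Finset.sum_insert hni]
    exact decomp_add hq0 (hf _ (Finset.mem_insert_self _ _))
      (ih fun t ht => hf t (Finset.mem_insert_of_mem ht))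

/-- The weak Nullstellensatz step over a general field: if the `qi i`, `i ∈ A`, have no common
zero in the algebraic closure, then `1` is a combination of them. -/
theorem exists_one_eq_sum (qi : Fin m → MvPolynomial (Fin d) K) (A : Finset (Fin m))
    (hnz : ¬ ∃ x : Fin d → AlgebraicClosure K, ∀ i ∈ A,
        MvPolynomial.eval x
          (MvPolynomial.map (algebraMap K (AlgebraicClosure K)) (qi i)) = 0) :
    ∃ h : Fin m → MvPolynomial (Fin d) K, ∑ i ∈ A, h i * qi i = 1 := by
  classical
  set I : Ideal (MvPolynomial (Fin d) K) :=
    Ideal.span (Set.range fun i : A => qi (i : Fin m)) with hI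
  have hIT : I = ⊤ := by
    by_contra hne
    obtain ⟨M, hM, hIM⟩ := Ideal.exists_le_maximal I hne
    letI : Field (MvPolynomial (Fin d) K ⧸ M) := Ideal.Quotient.field M
    have hint : ((Ideal.Quotient.mk M).comp (MvPolynomial.C)).IsIntegral :=
      MvPolynomial.quotient_mk_comp_C_isIntegral_of_isJacobsonRing M
    have halg : algebraMap K (MvPolynomial (Fin d) K ⧸ M)
        = ((Ideal.Quotient.mk M).comp (MvPolynomial.C)) := by
      rw [IsScalarTower.algebraMap_eq K (MvPolynomial (Fin d) K) (MvPolynomial (Fin d) K ⧸ M),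
        MvPolynomial.algebraMap_eq, Ideal.Quotient.algebraMap_eq]
    have : Algebra.IsIntegral K (MvPolynomial (Fin d) K ⧸ M) :=
      ⟨fun x => show (algebraMap K (MvPolynomial (Fin d) K ⧸ M)).IsIntegralElem x from
        halg ▸ hint x⟩
    have : Algebra.IsAlgebraic K (MvPolynomial (Fin d) K ⧸ M) :=
      Algebra.IsIntegral.isAlgebraic
    letI : NoZeroSMulDivisors K (MvPolynomial (Fin d) K ⧸ M) :=
      inferInstance
    let ψ : (MvPolynomial (Fin d) K ⧸ M) →ₐ[K] AlgebraicClosure K := IsAlgClosed.lift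
    have key : ∀ f : MvPolynomial (Fin d) K,
        MvPolynomial.eval (fun j => ψ (Ideal.Quotient.mk M (MvPolynomial.X j)))
          (MvPolynomial.map (algebraMap K (AlgebraicClosure K)) f)
          = ψ (Ideal.Quotient.mk M f) := by
      intro f
      have := RingHom.congr_fun (MvPolynomial.ringHom_ext (σ := Fin d)
        (f := ((MvPolynomial.eval fun j => ψ (Ideal.Quotient.mk M (MvPolynomial.X j))).comp
          (MvPolynomial.map (algebraMap K (AlgebraicClosure K)))))
        (g := (ψ.toRingHom.comp (Ideal.Quotient.mk M)))
        (fun k => by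
          simp only [RingHom.coe_comp, Function.comp_apply, MvPolynomial.map_C,
            MvPolynomial.eval_C, AlgHom.toRingHom_eq_coe, RingHom.coe_coe]
          exact (ψ.commutes k).symm)
        (fun j => by simp)) f
      simpa using this
    refine hnz ⟨fun j => ψ (Ideal.Quotient.mk M (MvPolynomial.X j)), fun i hi => ?_⟩
    rw [key]
    have : qi i ∈ M := hIM (Ideal.subset_span ⟨⟨i, hi⟩, rfl⟩)
    rw [Ideal.Quotient.eq_zero_iff_mem.mpr this, map_zero]
  have h1 : (1 : MvPolynomial (Fin d) K) ∈ I := hIT ▸ Submodule.mem_top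
  rw [hI, Ideal.mem_span_range_iff_exists_fun] at h1
  obtain ⟨cc, hcc⟩ := h1
  refine ⟨fun i => if h : i ∈ A then cc ⟨i, h⟩ else 0, ?_⟩
  rw [← hcc]
  rw [← Finset.sum_attach A (fun j => (if h : j ∈ A then cc ⟨j, h⟩ else 0) * qi j)]
  exact Finset.sum_congr rfl fun x _ => by rw [dif_pos x.2]

/-- Lexicographic trichotomy. -/
theorem lex_trichot {x y : Fin m → ℕ} (h : x ≠ y) :
    toLex x < toLex y ∨ toLex y < toLex x := by
  have htr := (Pi.isTrichotomous_lex (β := fun _ : Fin m => ℕ) (· < ·)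
      (fun {_} => (· < ·)) (wellFounded_lt)).trichotomous x y
  by_contra hc
  rw [not_or] at hc
  exact h (htr hc.1 hc.2)

theorem lex_lt_def (x y : Fin m → ℕ) :
    toLex x < toLex y ↔ ∃ i, (∀ j, j < i → x j = y j) ∧ x i < y i := Iff.rfl

/-- The main induction: any `p / ∏ qᵢ^{bᵢ}` is decomposable. -/
theorem decomp_div (qi : Fin m → MvPolynomial (Fin d) K) (hirr : ∀ i, Irreducible (qi i)) :
    ∀ (b : Fin m → ℕ) (p : MvPolynomial (Fin d) K),
      Decomp qi (φ p / φ (∏ j, qi j ^ b j)) := by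
  classical
  have hq0 : ∀ i, qi i ≠ 0 := fun i => (hirr i).ne_zero
  have hPw0 : ∀ w : Fin m → ℕ, (∏ j, qi j ^ w j) ≠ 0 :=
    fun w => Finset.prod_ne_zero_iff.mpr fun j _ => pow_ne_zero _ (hq0 j)
  set μ : (Fin m → ℕ) → ℕ ×ₗ (ℕ ×ₗ Lex (Fin m → ℕ)) := fun b =>
    toLex ((Finset.univ.filter fun j => b j ≠ 0).card, toLex (∑ j, b j, toLex b)) with hμ
  have wf : WellFounded (fun b b' : Fin m → ℕ => μ b < μ b') :=
    InvImage.wf μ (IsWellFounded.wf)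
  refine fun b => wf.induction
    (C := fun b => ∀ p, Decomp qi (φ p / φ (∏ j, qi j ^ b j))) b ?_
  clear b
  intro b IH p
  set A : Finset (Fin m) := Finset.univ.filter fun j => b j ≠ 0 with hA
  -- helper: μ decreases
  have hmu : ∀ v : Fin m → ℕ,
      (Finset.univ.filter fun j => v j ≠ 0) ⊆ A →
      (((Finset.univ.filter fun j => v j ≠ 0).card < A.card) ∨
        (∑ j, v j) < (∑ j, b j) ∨ ((∑ j, v j) = (∑ j, b j) ∧ toLex v < toLex b)) →
      μ v < μ b := by
    intro v hsub h
    have hcard : (Finset.univ.filter fun j => v j ≠ 0).card ≤ A.card :=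
      Finset.card_le_card hsub
    rcases h with h | h | ⟨h1, h2⟩
    · exact Prod.Lex.lt_iff.mpr (Or.inl h)
    · rcases lt_or_eq_of_le hcard with hc | hc
      · exact Prod.Lex.lt_iff.mpr (Or.inl hc)
      · exact Prod.Lex.lt_iff.mpr (Or.inr ⟨hc, Prod.Lex.lt_iff.mpr (Or.inl h)⟩)
    · rcases lt_or_eq_of_le hcard with hc | hc
      · exact Prod.Lex.lt_iff.mpr (Or.inl hc)
      · exact Prod.Lex.lt_iff.mpr (Or.inr ⟨hc, Prod.Lex.lt_iff.mpr (Or.inr ⟨h1, h2⟩)⟩)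
  by_cases hg : Good qi A
  · -- base case: the present denominator is already good
    refine ⟨fun A' => if A' = A then p else 0,
      fun A' i => if A' = A ∧ i ∈ A then b i else 1, ?_, ?_, ?_⟩
    · intro A' i hi
      dsimp only
      by_cases h : A' = A ∧ i ∈ A
      · rw [if_pos h]
        have hiA : i ∈ A := h.1 ▸ hi
        exact Nat.pos_of_ne_zero (Finset.mem_filter.mp hiA).2
      · rw [if_neg h]; exact one_pos
    · intro A' hP'
      have hAA : A' = A := by
        by_contra hne
        exact hP' (if_neg hne)
      rw [hAA]; exact hg
    · rw [Finset.sum_eq_single A]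
      · dsimp only
        rw [if_pos rfl]
        have hden : (∏ i ∈ A, qi i ^ (if A = A ∧ i ∈ A then b i else 1))
            = ∏ j, qi j ^ b j := by
          rw [show (∏ i ∈ A, qi i ^ (if A = A ∧ i ∈ A then b i else 1))
              = ∏ i ∈ A, qi i ^ b i from
            Finset.prod_congr rfl fun i hi => by rw [if_pos ⟨rfl, hi⟩]]
          refine Finset.prod_subset (Finset.subset_univ A) fun j _ hj => ?_
          have hbj : b j = 0 := by
            by_contra hbj
            exact hj (Finset.mem_filter.mpr ⟨Finset.mem_univ j, hbj⟩)
          rw [hbj, pow_zero]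
        rw [hden]
      · intro A' _ hne
        dsimp only
        rw [if_neg hne, map_zero, zero_div]
      · intro h
        exact absurd (Finset.mem_univ A) h
  · by_cases hcz : ∃ x : Fin d → AlgebraicClosure K, ∀ i ∈ A,
        MvPolynomial.eval x
          (MvPolynomial.map (algebraMap K (AlgebraicClosure K)) (qi i)) = 0
    · -- the qᵢ, i ∈ A, are algebraically dependent
      have hdep : ¬ AlgebraicIndependent K (fun i : A => qi (i : Fin m)) :=
        fun h => hg ⟨hcz, h⟩
      rw [algebraicIndependent_iff] at hdep
      push_neg at hdep
      obtain ⟨Q, hQeval, hQ0⟩ := hdep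
      set ext : (↥A →₀ ℕ) → (Fin m → ℕ) :=
        fun σ j => if h : j ∈ A then σ ⟨j, h⟩ else 0 with hext
      have hext_inj : ∀ {σ τ : ↥A →₀ ℕ}, ext σ = ext τ → σ = τ := by
        intro σ τ h
        ext i
        have := congr_fun h (i : Fin m)
        simpa [hext, dif_pos i.2] using this
      set Pw : (Fin m → ℕ) → MvPolynomial (Fin d) K := fun w => ∏ j, qi j ^ w j with hPw
      have hprod_ext : ∀ σ : ↥A →₀ ℕ, (∏ i : ↥A, qi (i : Fin m) ^ σ i) = Pw (ext σ) := by
        intro σ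
        calc (∏ i : ↥A, qi (i : Fin m) ^ σ i)
            = ∏ i : ↥A, qi (i : Fin m) ^ ext σ (i : Fin m) :=
              Finset.prod_congr rfl fun i _ => by simp only [hext]; rw [dif_pos i.2]
          _ = ∏ j ∈ A, qi j ^ ext σ j := Finset.prod_coe_sort A fun j => qi j ^ ext σ j
          _ = Pw (ext σ) := Finset.prod_subset (Finset.subset_univ A) fun j _ hj => by
              simp only [hext]; rw [dif_neg hj, pow_zero]
      have hrel : ∑ σ ∈ Q.support, MvPolynomial.C (MvPolynomial.coeff σ Q) * Pw (ext σ) = 0 := by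
        rw [aeval_def, eval₂_eq'] at hQeval
        rw [← hQeval]
        exact Finset.sum_congr rfl fun σ _ => by
          rw [MvPolynomial.algebraMap_eq, hprod_ext σ]
      -- choose the minimal exponent α
      set key : (↥A →₀ ℕ) → ℕ ×ₗ Lex (Fin m → ℕ) :=
        fun σ => toLex (∑ j, ext σ j, toLex (ext σ)) with hkeydef
      have wfk : WellFounded (fun σ τ : ↥A →₀ ℕ => key σ < key τ) :=
        InvImage.wf key (IsWellFounded.wf)
      have hsupp : (↑Q.support : Set (↥A →₀ ℕ)).Nonempty := by
        rw [Finset.coe_nonempty]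
        exact MvPolynomial.support_nonempty.mpr hQ0
      obtain ⟨α, hαs, hαmin⟩ := wfk.has_min _ hsupp
      rw [Finset.mem_coe] at hαs
      have hkey : ∀ σ ∈ Q.support.erase α, key α < key σ := by
        intro σ hσ
        obtain ⟨hne, hσs⟩ := Finset.mem_erase.mp hσ
        have hnot := hαmin σ (Finset.mem_coe.mpr hσs)
        have hext_ne : ext σ ≠ ext α := fun h => hne (hext_inj h)
        rcases Nat.lt_trichotomy (∑ j, ext σ j) (∑ j, ext α j) with h | h | h
        · exact absurd (Prod.Lex.lt_iff.mpr (Or.inl h)) hnot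
        · rcases lex_trichot hext_ne with hl | hl
          · exact absurd (Prod.Lex.toLex_lt_toLex.mpr (Or.inr ⟨h, hl⟩)) hnot
          · exact Prod.Lex.lt_iff.mpr (Or.inr ⟨h.symm, hl⟩)
        · exact Prod.Lex.lt_iff.mpr (Or.inl h)
      have hcα : MvPolynomial.coeff α Q ≠ 0 := MvPolynomial.mem_support_iff.mp hαs
      -- the new exponent vectors
      set v : (↥A →₀ ℕ) → (Fin m → ℕ) := fun σ j => b j + ext α j - ext σ j with hv
      set u : (↥A →₀ ℕ) → (Fin m → ℕ) := fun σ j => ext σ j - (b j + ext α j) with hu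
      set pp : (↥A →₀ ℕ) → MvPolynomial (Fin d) K := fun σ =>
        -(MvPolynomial.C ((MvPolynomial.coeff α Q)⁻¹ * MvPolynomial.coeff σ Q) * p * Pw (u σ))
        with hpp
      -- the fraction identity
      have hident : φ p / φ (∏ j, qi j ^ b j)
          = ∑ σ ∈ Q.support.erase α, φ (pp σ) / φ (Pw (v σ)) := by
        have hD : ∀ σ : ↥A →₀ ℕ,
            Pw (v σ) * Pw (fun j => b j + ext α j - v σ j) = Pw (fun j => b j + ext α j) := by
          intro σ
          rw [hPw]
          rw [← Finset.prod_mul_distrib]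
          exact Finset.prod_congr rfl fun j _ => by
            rw [← pow_add]
            congr 1
            simp only [hv]
            omega
        have hterm : ∀ σ ∈ Q.support.erase α, φ (pp σ) / φ (Pw (v σ))
            = φ (-(MvPolynomial.C ((MvPolynomial.coeff α Q)⁻¹ * MvPolynomial.coeff σ Q) * p
                * Pw (ext σ))) / φ (Pw (fun j => b j + ext α j)) := by
          intro σ _
          rw [frac_mul (pp σ) _ (Pw (fun j => b j + ext α j - v σ j)) (hPw0 _), hD σ]
          congr 2
          have hUV : Pw (u σ) * Pw (fun j => b j + ext α j - v σ j) = Pw (ext σ) := by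
            simp only [hPw]
            rw [← Finset.prod_mul_distrib]
            exact Finset.prod_congr rfl fun j _ => by
              rw [← pow_add]
              congr 1
              simp only [hv, hu]
              omega
          simp only [hpp]
          linear_combination
            (-(MvPolynomial.C ((MvPolynomial.coeff α Q)⁻¹ * MvPolynomial.coeff σ Q) * p)) * hUV
        rw [Finset.sum_congr rfl hterm]
        rw [← Finset.sum_div, ← map_sum]
        have hnum : ∑ σ ∈ Q.support.erase α,
            -(MvPolynomial.C ((MvPolynomial.coeff α Q)⁻¹ * MvPolynomial.coeff σ Q) * p
              * Pw (ext σ)) = p * Pw (ext α) := by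
          have h2 : ∑ σ ∈ Q.support.erase α,
              MvPolynomial.C (MvPolynomial.coeff σ Q) * Pw (ext σ)
              = -(MvPolynomial.C (MvPolynomial.coeff α Q) * Pw (ext α)) := by
            have := Finset.add_sum_erase _ (fun σ =>
              MvPolynomial.C (MvPolynomial.coeff σ Q) * Pw (ext σ)) hαs
            rw [hrel] at this
            linear_combination this
          calc ∑ σ ∈ Q.support.erase α,
              -(MvPolynomial.C ((MvPolynomial.coeff α Q)⁻¹ * MvPolynomial.coeff σ Q) * p
                * Pw (ext σ))
              = (-(MvPolynomial.C (MvPolynomial.coeff α Q)⁻¹ * p))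
                  * ∑ σ ∈ Q.support.erase α,
                    MvPolynomial.C (MvPolynomial.coeff σ Q) * Pw (ext σ) := by
                rw [Finset.mul_sum]
                exact Finset.sum_congr rfl fun σ _ => by
                  rw [map_mul]
                  ring
            _ = MvPolynomial.C (MvPolynomial.coeff α Q)⁻¹
                  * MvPolynomial.C (MvPolynomial.coeff α Q) * (p * Pw (ext α)) := by
                rw [h2]; ring
            _ = p * Pw (ext α) := by
                rw [← map_mul, inv_mul_cancel₀ hcα, map_one, one_mul]
        rw [hnum]
        have hbα : Pw b * Pw (ext α) = Pw (fun j => b j + ext α j) := by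
          simp only [hPw]
          rw [← Finset.prod_mul_distrib]
          exact Finset.prod_congr rfl fun j _ => by rw [← pow_add]
        rw [show (∏ j, qi j ^ b j) = Pw b from rfl]
        rw [frac_mul p (Pw b) (Pw (ext α)) (hPw0 _), hbα]
      rw [hident]
      refine decomp_sum hq0 _ _ fun σ hσ => ?_
      -- measure decrease
      have hμlt : μ (v σ) < μ b := by
        have hVsub : (Finset.univ.filter fun j => v σ j ≠ 0) ⊆ A := by
          intro j hj
          rw [Finset.mem_filter] at hj
          rw [hA, Finset.mem_filter]
          refine ⟨Finset.mem_univ j, ?_⟩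
          intro hbj
          apply hj.2
          have hj_notA : j ∉ A := by
            rw [hA, Finset.mem_filter]
            push_neg
            intro _
            simpa using hbj
          simp only [hv, hext, dif_neg hj_notA]
          omega
        by_cases hclip : ∃ j, b j + ext α j < ext σ j
        · obtain ⟨j, hj⟩ := hclip
          have hjA : j ∈ A := by
            by_contra hjA
            simp only [hext, dif_neg hjA] at hj
            omega
          have hbj : b j ≠ 0 := (Finset.mem_filter.mp hjA).2
          refine hmu (v σ) hVsub (Or.inl ?_)
          refine Finset.card_lt_card ⟨hVsub, fun hsub2 => ?_⟩
          have : j ∈ Finset.univ.filter fun j => v σ j ≠ 0 :=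
            hsub2 (Finset.mem_filter.mpr ⟨Finset.mem_univ j, hbj⟩)
          rw [Finset.mem_filter] at this
          apply this.2
          simp only [hv]
          omega
        · push_neg at hclip
          have hsum : (∑ j, v σ j) + (∑ j, ext σ j) = (∑ j, b j) + (∑ j, ext α j) := by
            rw [← Finset.sum_add_distrib, ← Finset.sum_add_distrib]
            exact Finset.sum_congr rfl fun j _ => by
              have := hclip j
              simp only [hv]
              omega
          have hk := hkey σ hσ
          rw [hkeydef] at hk
          beta_reduce at hk
          rcases Prod.Lex.toLex_lt_toLex.mp hk with h | ⟨h1, h2⟩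
          · exact hmu (v σ) hVsub (Or.inr (Or.inl (by omega)))
          · refine hmu (v σ) hVsub (Or.inr (Or.inr ⟨by omega, ?_⟩))
            obtain ⟨k, hkj, hklt⟩ := (lex_lt_def _ _).mp h2
            refine (lex_lt_def _ _).mpr ⟨k, fun j hj => ?_, ?_⟩
            · have := hkj j hj
              have := hclip j
              simp only [hv]
              omega
            · have := hclip k
              simp only [hv]
              omega
      exact IH (v σ) hμlt (pp σ)
    · -- no common zero: weak Nullstellensatz
      obtain ⟨h, hone⟩ := exists_one_eq_sum qi A hcz
      set v : Fin m → (Fin m → ℕ) := fun i j => if j = i then b j - 1 else b j with hv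
      have hident : φ p / φ (∏ j, qi j ^ b j)
          = ∑ i ∈ A, φ (p * h i) / φ (∏ j, qi j ^ v i j) := by
        have hsplit : ∀ i ∈ A, (∏ j, qi j ^ b j) = (∏ j, qi j ^ v i j) * qi i := by
          intro i hi
          have hbi : b i ≠ 0 := (Finset.mem_filter.mp hi).2
          have h1 : (∏ j, qi j ^ v i j) * qi i
              = (∏ j, qi j ^ v i j) * ∏ j, (if j = i then qi j else 1) := by
            rw [Finset.prod_ite_eq' Finset.univ i qi, if_pos (Finset.mem_univ i)]
          rw [h1, ← Finset.prod_mul_distrib]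
          refine Finset.prod_congr rfl fun j _ => ?_
          by_cases hj : j = i
          · subst hj
            simp only [hv, if_pos rfl, if_true]
            rw [← pow_succ]
            congr 1
            omega
          · simp only [hv, if_neg hj, mul_one]
        have hterm : ∀ i ∈ A, φ (p * h i) / φ (∏ j, qi j ^ v i j)
            = φ (p * h i * qi i) / φ (∏ j, qi j ^ b j) := by
          intro i hi
          rw [frac_mul (p * h i) _ (qi i) (hq0 i), ← hsplit i hi]
        rw [Finset.sum_congr rfl hterm, ← Finset.sum_div, ← map_sum]
        congr 2
        calc p = p * ∑ i ∈ A, h i * qi i := by rw [hone, mul_one]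
          _ = ∑ i ∈ A, p * h i * qi i := by rw [Finset.mul_sum]; exact Finset.sum_congr rfl fun i _ => by ring
      rw [hident]
      refine decomp_sum hq0 _ _ fun i hi => ?_
      have hbi : b i ≠ 0 := (Finset.mem_filter.mp hi).2
      have hμlt : μ (v i) < μ b := by
        refine hmu (v i) ?_ (Or.inr (Or.inl ?_))
        · intro j hj
          rw [Finset.mem_filter] at hj
          rw [hA, Finset.mem_filter]
          refine ⟨Finset.mem_univ j, fun hbj => hj.2 ?_⟩
          by_cases hji : j = i
          · subst hji
            simp only [hv, if_pos rfl]
            omega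
          · simp only [hv, if_neg hji]
            omega
        · refine Finset.sum_lt_sum (fun j _ => ?_) ⟨i, Finset.mem_univ i, ?_⟩
          · by_cases hji : j = i
            · subst hji
              simp only [hv, if_pos rfl]
              omega
            · simp only [hv, if_neg hji]
              omega
          · simp only [hv, if_pos rfl]
            omega
      exact IH (v i) hμlt (p * h i)

end LeinartasAux

/-- **Leĭnartas decomposition** (Theorem 1).
Let `q = c · q₁^{e₁} ⋯ q_m^{e_m}` be the factorization of `q ≠ 0` into a unit and
pairwise non-associate irreducibles.  Then `p/q` can be written as
`Σ_A p_A / ∏_{i∈A} q_i^{b_{A,i}}`, the sum over subsets `A ⊆ {1,…,m}` such that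
the `q_i`, `i ∈ A`, have a common zero in `K̄^d` and are algebraically
independent over `K`. -/
theorem leinartas_decomposition {K : Type*} [Field K] {d m : ℕ} (hd : 1 ≤ d)
    (p q : MvPolynomial (Fin d) K) (hq : q ≠ 0)
    (c : MvPolynomial (Fin d) K) (hc : IsUnit c)
    (qi : Fin m → MvPolynomial (Fin d) K) (e : Fin m → ℕ)
    (hirr : ∀ i, Irreducible (qi i)) (he : ∀ i, 0 < e i)
    (hassoc : ∀ i j, i ≠ j → ¬ Associated (qi i) (qi j))
    (hfac : q = c * ∏ i, qi i ^ e i) :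
    ∃ (P : Finset (Fin m) → MvPolynomial (Fin d) K)
      (b : Finset (Fin m) → Fin m → ℕ),
      (∀ A, ∀ i ∈ A, 0 < b A i) ∧
      (∀ A, P A ≠ 0 →
        (∃ x : Fin d → AlgebraicClosure K, ∀ i ∈ A,
            MvPolynomial.eval x
              (MvPolynomial.map (algebraMap K (AlgebraicClosure K)) (qi i)) = 0) ∧
          AlgebraicIndependent K (fun i : A => qi (i : Fin m))) ∧
      algebraMap (MvPolynomial (Fin d) K) (FractionRing (MvPolynomial (Fin d) K)) p /
          algebraMap (MvPolynomial (Fin d) K) (FractionRing (MvPolynomial (Fin d) K)) q =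
        ∑ A : Finset (Fin m),
          algebraMap (MvPolynomial (Fin d) K) (FractionRing (MvPolynomial (Fin d) K)) (P A) /
            algebraMap (MvPolynomial (Fin d) K) (FractionRing (MvPolynomial (Fin d) K))
              (∏ i ∈ A, qi i ^ b A i) := by
  classical
  obtain ⟨P, B, hB, hP, hsum⟩ :=
    LeinartasAux.decomp_div qi hirr e ((↑hc.unit⁻¹ : MvPolynomial (Fin d) K) * p)
  refine ⟨P, B, hB, fun A hPA => hP A hPA, ?_⟩
  rw [← hsum]
  have hq0 : ∀ i, qi i ≠ 0 := fun i => (hirr i).ne_zero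
  have hprod : (∏ j, qi j ^ e j) ≠ 0 :=
    Finset.prod_ne_zero_iff.mpr fun j _ => pow_ne_zero _ (hq0 j)
  rw [div_eq_div_iff (LeinartasAux.phi_ne_zero hq) (LeinartasAux.phi_ne_zero hprod),
    ← map_mul, ← map_mul]
  congr 1
  have hcc : (↑hc.unit⁻¹ : MvPolynomial (Fin d) K) * c = 1 := by
    have h1 := hc.unit.inv_mul
    rwa [IsUnit.unit_spec] at h1
  rw [hfac]
  linear_combination (-(p * ∏ j, qi j ^ e j)) * hcc
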